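/- Let V be a real normed vector space, let μ1, μ2 ∈ V with μ1 ≠ μ2, and let p, q be positive real numbers with p ≠ q. Define h1 = (p/(p+q))·μ1 + (q/(p+q))·μ2 and h2 = (q/(p+q))·μ1 + (p/(p+q))·μ2, the original second-layer representations g1 = (p/(p+q))·h1 + (q/(p+q))·h2 and g2 = (q/(p+q))·h1 + (p/(p+q))·h2 with Dist = ‖g1 - g2‖, and the rewired second-layer representations with intra-class probability p' = 1 and inter-class probability q' = 0, namely g1' = h1 and g2' = h2, with Dist' = ‖g1' - g2'‖. Then Dist' = ((p + q)/|p - q|) · Dist and Dist' > Dist. -/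

import Mathlib

/-- With the rewiring `p' = 1`, `q' = 0` (so `g1' = h1`, `g2' = h2`), the rewired distance
satisfies `Dist' = ((p + q) / |p - q|) * Dist` and `Dist' > Dist`. -/
theorem csbm_graphtop_rewiring {V : Type*} [NormedAddCommGroup V] [NormedSpace ℝ V]
    (μ1 μ2 : V) (hμ : μ1 ≠ μ2) (p q : ℝ) (hp : 0 < p) (hq : 0 < q) (hpq : p ≠ q)
    (h1 h2 g1 g2 g1' g2' : V)
    (hh1 : h1 = (p / (p + q)) • μ1 + (q / (p + q)) • μ2)
    (hh2 : h2 = (q / (p + q)) • μ1 + (p / (p + q)) • μ2)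
    (hg1 : g1 = (p / (p + q)) • h1 + (q / (p + q)) • h2)
    (hg2 : g2 = (q / (p + q)) • h1 + (p / (p + q)) • h2)
    (hg1' : g1' = h1) (hg2' : g2' = h2)
    (Dist Dist' : ℝ) (hDist : Dist = ‖g1 - g2‖) (hDist' : Dist' = ‖g1' - g2'‖) :
    Dist' = ((p + q) / |p - q|) * Dist ∧ Dist' > Dist := by
  have hpq0 : (0:ℝ) < p + q := by linarith
  set c : ℝ := (p - q) / (p + q) with hc
  have hdiff : h1 - h2 = c • (μ1 - μ2) := by
    rw [hh1, hh2, hc, smul_sub, sub_div]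
    module
  have hgdiff : g1 - g2 = c • (h1 - h2) := by
    rw [hg1, hg2, hc, smul_sub, sub_div]
    module
  have hμn : (0:ℝ) < ‖μ1 - μ2‖ := by
    rw [norm_pos_iff]; exact sub_ne_zero.mpr hμ
  have hcabs : |c| = |p - q| / (p + q) := by
    rw [hc, abs_div, abs_of_pos hpq0]
  have hcpos : (0:ℝ) < |c| := by
    rw [hcabs]
    exact div_pos (abs_pos.mpr (sub_ne_zero.mpr hpq)) hpq0
  have hclt : |c| < 1 := by
    rw [hcabs, div_lt_one hpq0, abs_sub_lt_iff]
    constructor <;> linarith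
  have hD' : Dist' = |c| * ‖μ1 - μ2‖ := by
    rw [hDist', hg1', hg2', hdiff, norm_smul, Real.norm_eq_abs]
  have hD : Dist = |c| * (|c| * ‖μ1 - μ2‖) := by
    rw [hDist, hgdiff, hdiff, norm_smul, norm_smul, Real.norm_eq_abs]
  have hpqabs : (0:ℝ) < |p - q| := abs_pos.mpr (sub_ne_zero.mpr hpq)
  constructor
  · rw [hD', hD, hcabs]
    field_simp
  · rw [hD', hD]
    nlinarith [mul_pos hcpos hμn]
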